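/- Let H : (0,∞) → ℝ be continuous and h ≥ 0. If A satisfies the linear ODE z·A'(z) + 2A(z) = 2H(z), then K(z) := √(h² + (1−h²)z²)·A(z)/√(1 + h²A(z)²) satisfies the helicoidal mean curvature equation 2H(z) = [(h² + (1−h²)z²)·z·K'(z) + (2h²(1−K(z)²) + (1−h²)z²)·K(z)] / (h²(1−K(z)²) + (1−h²)z²)^{3/2}, on any interval where h²(1−K²) + (1−h²)z² > 0. -/

import Mathlib

open Real

private lemma rpow_three_halves {x : ℝ} (hx : 0 < x) :
    x ^ ((3:ℝ)/2) = x * Real.sqrt x := by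
  rw [show (3:ℝ)/2 = 1 + 1/2 by norm_num, Real.rpow_add hx, Real.rpow_one,
    ← Real.sqrt_eq_rpow]

/-- If A solves the linear ODE z·A' + 2A = 2H on (0,∞), then
K(z) = √(h² + (1−h²)z²)·A(z)/√(1 + h²A(z)²) satisfies the mean curvature equation of
a helicoidal surface with pitch h:
2H = [(h² + (1−h²)z²)zK' + (2h²(1−K²) + (1−h²)z²)K] / (h²(1−K²) + (1−h²)z²)^{3/2},
wherever h²(1−K²) + (1−h²)z² > 0. -/
theorem prescribed_mean_curvature_helicoidal
    (h : ℝ) (hh : 0 ≤ h)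
    (H A : ℝ → ℝ)
    (hHcont : ContinuousOn H (Set.Ioi 0))
    (hA : DifferentiableOn ℝ A (Set.Ioi 0))
    (hODE : ∀ z ∈ Set.Ioi (0:ℝ), z * deriv A z + 2 * A z = 2 * H z)
    (K : ℝ → ℝ)
    (hKdef : ∀ z, K z = Real.sqrt (h^2 + (1 - h^2) * z^2) * A z
        / Real.sqrt (1 + h^2 * A z ^ 2)) :
    ∀ z ∈ Set.Ioi (0:ℝ),
      h^2 * (1 - K z ^ 2) + (1 - h^2) * z^2 > 0 →
      2 * H z =
        ((h^2 + (1 - h^2) * z^2) * z * deriv K z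
          + (2 * h^2 * (1 - K z ^ 2) + (1 - h^2) * z^2) * K z)
        / (h^2 * (1 - K z ^ 2) + (1 - h^2) * z^2) ^ ((3:ℝ)/2) := by
  intro z hz hD
  have hz0 : (0:ℝ) < z := hz
  set a : ℝ := A z with ha
  set b : ℝ := deriv A z with hb
  set P : ℝ := h^2 + (1 - h^2) * z^2 with hPdef
  set Q : ℝ := 1 + h^2 * a^2 with hQdef
  have hQpos : 0 < Q := by positivity
  -- P > 0
  have hPpos : 0 < P := by
    rcases lt_or_ge 0 P with h' | h'
    · exact h'
    · exfalso
      have hsp0 : Real.sqrt (h^2 + (1 - h^2) * z^2) = 0 := by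
        rw [← hPdef]; exact Real.sqrt_eq_zero'.mpr h'
      have hK0 : K z = 0 := by rw [hKdef z, hsp0, zero_mul, zero_div]
      rw [hK0] at hD
      rw [hPdef] at h'
      nlinarith [hD]
  set sp : ℝ := Real.sqrt P with hspdef
  set sq : ℝ := Real.sqrt Q with hsqdef
  have hsp : 0 < sp := Real.sqrt_pos.mpr hPpos
  have hsq : 0 < sq := Real.sqrt_pos.mpr hQpos
  have hs2 : sp^2 = P := Real.sq_sqrt hPpos.le
  have hq2 : sq^2 = Q := Real.sq_sqrt hQpos.le
  -- K z value
  have hKz : K z = sp * a / sq := hKdef z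
  -- derivative of A at z
  have hAd : HasDerivAt A b z :=
    ((hA z hz).differentiableAt (Ioi_mem_nhds hz0)).hasDerivAt
  -- derivative of K
  have hv : deriv K z =
      ((1 - h^2) * z * a * sq^2 + sp^2 * b * sq^2 - sp^2 * a^2 * b * h^2)
        / (sp * sq^3) := by
    have hPd : HasDerivAt (fun t : ℝ => h^2 + (1 - h^2) * t^2) (2 * (1 - h^2) * z) z := by
      have := ((hasDerivAt_pow 2 z).const_mul (1 - h^2)).const_add (h^2)
      refine this.congr_deriv ?_
      ring
    have hspd : HasDerivAt (fun t : ℝ => Real.sqrt (h^2 + (1 - h^2) * t^2))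
        ((2 * (1 - h^2) * z) / (2 * sp)) z := hPd.sqrt hPpos.ne'
    have hQd : HasDerivAt (fun t : ℝ => 1 + h^2 * A t ^ 2)
        (h^2 * ((2:ℕ) * a ^ 1 * b)) z := ((hAd.pow 2).const_mul (h^2)).const_add 1
    have hsqd : HasDerivAt (fun t : ℝ => Real.sqrt (1 + h^2 * A t ^ 2))
        ((h^2 * ((2:ℕ) * a ^ 1 * b)) / (2 * sq)) z := hQd.sqrt hQpos.ne'
    have hKd := (hspd.mul hAd).div hsqd hsq.ne'
    simp only [Pi.mul_apply] at hKd
    replace hKd : HasDerivAt (fun t : ℝ => Real.sqrt (h^2 + (1 - h^2) * t^2) * A t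
        / Real.sqrt (1 + h^2 * A t ^ 2)) _ z := hKd
    have hKfun : K = fun t : ℝ => Real.sqrt (h^2 + (1 - h^2) * t^2) * A t
        / Real.sqrt (1 + h^2 * A t ^ 2) := funext hKdef
    rw [hKfun, hKd.deriv, ← ha, ← hPdef, ← hQdef, ← hspdef, ← hsqdef]
    push_cast
    field_simp
  -- rewrite the K z expressions
  have hK2 : 1 - K z ^ 2 = (sq^2 - sp^2 * a^2) / sq^2 := by
    rw [hKz]; field_simp
  -- denominator value
  have hDval : h^2 * (1 - K z ^ 2) + (1 - h^2) * z^2 = P / Q := by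
    rw [hK2, hq2, hs2]
    field_simp [hQdef]
    ring
  have hDr : (h^2 * (1 - K z ^ 2) + (1 - h^2) * z^2) ^ ((3:ℝ)/2)
      = P * sp / (Q * sq) := by
    rw [hDval, Real.div_rpow hPpos.le hQpos.le, rpow_three_halves hPpos,
      rpow_three_halves hQpos, ← hspdef, ← hsqdef]
  have hODEz : z * b + 2 * a = 2 * H z := hODE z hz
  rw [← hODEz, hDr, hv, hK2, hKz]
  rw [eq_div_iff (by positivity)]
  field_simp
  rw [hs2, hq2]
  linear_combination (-(Q*P)*(z*b*P + 2*a*P)) * hQdef + (2*a*Q*Q*P) * hPdef
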